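/- Let D, D* be atomless probability measures on ℝ, and fix 0 < ε < 1. Suppose that for every j ∈ [⌈lg(1/ε)⌉+2] and every i ∈ [2^j], |D(B_{i,j}) - 2^{-j}| < max(ε/j², ε/(lg(1/ε)+3))/10, where B_{i,j} are the dyadic quantile buckets of D*. Then d_K(D, D*) < ε. -/

import Mathlib

open MeasureTheory

/-- The (generalized inverse) quantile function `q_x = sup{y : D*((-∞,y]) ≤ x}` of a measure,
valued in `EReal`, with the special cases `q₀ = -∞` and `q₁ = +∞`. -/
noncomputable def quant (μ : Measure ℝ) (x : ℝ) : EReal :=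
  if x = 0 then ⊥ else if x = 1 then ⊤ else
    sSup {z : EReal | ∃ y : ℝ, z = (y : EReal) ∧ (μ (Set.Iic y)).toReal ≤ x}

/-- The dyadic bucket `B_{i,j} = (q_{(i-1)·2^{-j}}, q_{i·2^{-j}}]` determined by the quantile
function of `μ`. -/
noncomputable def bucket (μ : Measure ℝ) (i j : ℕ) : Set ℝ :=
  {y : ℝ | quant μ (((i : ℝ) - 1) * 2 ^ (-(j : ℤ))) < (y : EReal) ∧
    (y : EReal) ≤ quant μ ((i : ℝ) * 2 ^ (-(j : ℤ)))}

/-- The Kolmogorov distance between measures on `ℝ`. -/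
noncomputable def kolDist (μ ν : Measure ℝ) : ℝ :=
  ⨆ x : ℝ, |(μ (Set.Iic x)).toReal - (ν (Set.Iic x)).toReal|

namespace KolAux

def IicE (q : EReal) : Set ℝ := {y : ℝ | (y : EReal) ≤ q}

lemma measurableSet_IicE (q : EReal) : MeasurableSet (IicE q) :=
  measurable_coe_real_ereal measurableSet_Iic

lemma IicE_mono {q q' : EReal} (h : q ≤ q') : IicE q ⊆ IicE q' :=
  fun _ hy => le_trans hy h

lemma quant_zero (μ : Measure ℝ) : quant μ 0 = ⊥ := if_pos rfl

lemma quant_one (μ : Measure ℝ) : quant μ 1 = ⊤ := by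
  rw [quant, if_neg one_ne_zero, if_pos rfl]

lemma quant_mono (μ : Measure ℝ) {x x' : ℝ} (h0 : 0 ≤ x) (h : x ≤ x') (h1 : x' ≤ 1) :
    quant μ x ≤ quant μ x' := by
  by_cases hx0 : x = 0
  · rw [hx0, quant_zero]; exact bot_le
  by_cases hx'1 : x' = 1
  · rw [hx'1, quant_one]; exact le_top
  have hx1 : x ≠ 1 := fun hh => hx'1 (le_antisymm h1 (hh ▸ h))
  have hx'0 : x' ≠ 0 := fun hh => hx0 (le_antisymm (hh ▸ h) h0)
  rw [quant, quant, if_neg hx0, if_neg hx1, if_neg hx'0, if_neg hx'1]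
  refine sSup_le_sSup fun z hz => ?_
  obtain ⟨y, rfl, hy⟩ := hz
  exact ⟨y, rfl, hy.trans h⟩

lemma lt_cdf_of_quant_lt (μ : Measure ℝ) {t : ℝ} (ht0 : t ≠ 0) (ht1 : t ≠ 1) {x : ℝ}
    (h : quant μ t < (x : EReal)) : t < (μ (Set.Iic x)).toReal := by
  by_contra hc
  push_neg at hc
  have hmem : (x : EReal) ≤ quant μ t := by
    rw [quant, if_neg ht0, if_neg ht1]
    exact le_sSup ⟨x, rfl, hc⟩
  exact absurd h (not_lt.2 hmem)

lemma cdf_le_of_le_quant (μ : Measure ℝ) [IsProbabilityMeasure μ] (hμ : ∀ y : ℝ, μ {y} = 0)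
    {t : ℝ} (h0 : 0 ≤ t) (ht0 : t ≠ 0) (ht1 : t ≠ 1) {x : ℝ}
    (hx : (x : EReal) ≤ quant μ t) : (μ (Set.Iic x)).toReal ≤ t := by
  by_contra hgt
  push_neg at hgt
  have hIio : μ (Set.Iic x) = μ (Set.Iio x) := by
    refine le_antisymm ?_ (measure_mono Set.Iio_subset_Iic_self)
    calc μ (Set.Iic x) = μ (Set.Iio x ∪ {x}) := by rw [Set.Iio_union_right]
    _ ≤ μ (Set.Iio x) + μ {x} := measure_union_le _ _
    _ = μ (Set.Iio x) := by rw [hμ x, add_zero]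
  obtain ⟨y, hyx, hy⟩ : ∃ y : ℝ, y < x ∧ t < (μ (Set.Iic y)).toReal := by
    by_contra hno
    push_neg at hno
    have hcup : Set.Iio x = ⋃ n : ℕ, Set.Iic (x - 1 / ((n : ℝ) + 1)) := by
      ext y
      simp only [Set.mem_Iio, Set.mem_iUnion, Set.mem_Iic]
      constructor
      · intro hyx
        obtain ⟨n, hn⟩ := exists_nat_one_div_lt (sub_pos.2 hyx)
        exact ⟨n, by linarith⟩
      · rintro ⟨n, hn⟩
        have hpos : (0:ℝ) < 1 / ((n : ℝ) + 1) := by positivity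
        linarith
    have hmono : Monotone fun n : ℕ => Set.Iic (x - 1 / ((n : ℝ) + 1)) := by
      intro n m hnm
      apply Set.Iic_subset_Iic.2
      have hle : (1:ℝ) / ((m:ℝ) + 1) ≤ 1 / ((n:ℝ) + 1) := by
        apply one_div_le_one_div_of_le (by positivity)
        have : (n:ℝ) ≤ (m:ℝ) := Nat.cast_le.2 hnm
        linarith
      linarith
    have hle : μ (Set.Iio x) ≤ ENNReal.ofReal t := by
      rw [hcup, hmono.measure_iUnion]
      refine iSup_le fun n => ?_
      have h1 : x - 1 / ((n:ℝ) + 1) < x := by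
        have hpos : (0:ℝ) < 1 / ((n:ℝ) + 1) := by positivity
        linarith
      exact (ENNReal.le_ofReal_iff_toReal_le (measure_ne_top _ _) h0).2 (hno _ h1)
    have hle' : μ (Set.Iic x) ≤ ENNReal.ofReal t := hIio.le.trans hle
    exact absurd hgt (not_lt.2 (ENNReal.toReal_le_of_le_ofReal h0 hle'))
  have hq : quant μ t ≤ (y : EReal) := by
    rw [quant, if_neg ht0, if_neg ht1]
    refine sSup_le ?_
    rintro z ⟨w, rfl, hw⟩
    have hwy : w ≤ y := by
      by_contra hcw
      push_neg at hcw
      have hm : (μ (Set.Iic y)).toReal ≤ (μ (Set.Iic w)).toReal :=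
        ENNReal.toReal_mono (measure_ne_top _ _) (measure_mono (Set.Iic_subset_Iic.2 hcw.le))
      linarith
    exact EReal.coe_le_coe_iff.2 hwy
  have hxy : (x : EReal) ≤ (y : EReal) := hx.trans hq
  exact absurd hyx (not_lt.2 (EReal.coe_le_coe_iff.1 hxy))

lemma bucket_toReal (D μ : Measure ℝ) [IsProbabilityMeasure D] {i j : ℕ} (hi : 1 ≤ i)
    (hij : (i : ℝ) * 2 ^ (-(j:ℤ)) ≤ 1) :
    (D (bucket μ i j)).toReal
      = (D (IicE (quant μ ((i:ℝ) * 2 ^ (-(j:ℤ)))))).toReal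
        - (D (IicE (quant μ (((i:ℝ) - 1) * 2 ^ (-(j:ℤ)))))).toReal := by
  have hpow : (0:ℝ) < 2 ^ (-(j:ℤ)) := by positivity
  have hi1 : (1:ℝ) ≤ (i:ℝ) := by exact_mod_cast hi
  have h0 : 0 ≤ ((i:ℝ) - 1) * 2 ^ (-(j:ℤ)) := by nlinarith
  have hmono : ((i:ℝ) - 1) * 2 ^ (-(j:ℤ)) ≤ (i:ℝ) * 2 ^ (-(j:ℤ)) := by nlinarith
  have hsub : IicE (quant μ (((i:ℝ) - 1) * 2 ^ (-(j:ℤ))))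
      ⊆ IicE (quant μ ((i:ℝ) * 2 ^ (-(j:ℤ)))) :=
    IicE_mono (quant_mono μ h0 hmono hij)
  have hbe : bucket μ i j
      = IicE (quant μ ((i:ℝ) * 2 ^ (-(j:ℤ)))) \ IicE (quant μ (((i:ℝ) - 1) * 2 ^ (-(j:ℤ)))) := by
    ext y
    simp only [bucket, IicE, Set.mem_setOf_eq, Set.mem_diff, not_le]
    tauto
  rw [hbe, measure_diff hsub (measurableSet_IicE _).nullMeasurableSet (measure_ne_top _ _),
    ENNReal.toReal_sub_of_le (measure_mono hsub) (measure_ne_top _ _)]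

lemma sum_inv_sq_le : ∀ n : ℕ, ∑ k ∈ Finset.Icc 1 (n + 1), (1:ℝ) / (k:ℝ) ^ 2 ≤ 2 - 1 / ((n:ℝ) + 1)
  | 0 => by norm_num
  | (n+1) => by
    rw [Finset.sum_Icc_succ_top (by omega : 1 ≤ n + 1 + 1)]
    have ih := sum_inv_sq_le n
    have hn : (0:ℝ) < (n:ℝ) + 1 := by positivity
    have heq : 1 / ((n:ℝ) + 1) - 1 / ((n:ℝ) + 2) = 1 / (((n:ℝ) + 1) * ((n:ℝ) + 2)) := by
      field_simp
      ring
    have hmul : (((n:ℝ) + 1) * ((n:ℝ) + 2)) ≤ ((n:ℝ) + 2) ^ 2 := by nlinarith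
    have hkey : (1:ℝ) / ((n:ℝ) + 2) ^ 2 ≤ 1 / ((n:ℝ) + 1) - 1 / ((n:ℝ) + 2) := by
      rw [heq]
      exact one_div_le_one_div_of_le (by positivity) hmul
    push_cast
    rw [show ((n:ℝ) + 1 + 1) = ((n:ℝ) + 2) from by ring]
    linarith

end KolAux

open KolAux

/-- Contrapositive of the main structural lemma: if every dyadic bucket of `D*` at the levels
`j ∈ [⌈lg(1/ε)⌉+2]` has probability under `D` within `max(ε/j², ε/(lg(1/ε)+3))/10` of `2^{-j}`,
then `d_K(D, D*) < ε`. -/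
theorem kolDist_lt_of_buckets_close (D Dstar : Measure ℝ) [IsProbabilityMeasure D]
    [IsProbabilityMeasure Dstar] (hD : ∀ y : ℝ, D {y} = 0) (hDstar : ∀ y : ℝ, Dstar {y} = 0)
    (ε : ℝ) (hε0 : 0 < ε) (hε1 : ε < 1)
    (hclose : ∀ j : ℕ, 1 ≤ j → j ≤ ⌈Real.logb 2 (1 / ε)⌉₊ + 2 →
      ∀ i : ℕ, 1 ≤ i → i ≤ 2 ^ j →
        |(D (bucket Dstar i j)).toReal - (2 : ℝ) ^ (-(j : ℤ))| <
          max (ε / (j : ℝ) ^ 2) (ε / (Real.logb 2 (1 / ε) + 3)) / 10) :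
    kolDist D Dstar < ε := by
  classical
  set L : ℝ := Real.logb 2 (1 / ε) with hL
  have hL0 : 0 ≤ L := Real.logb_nonneg one_lt_two (by rw [le_div_iff₀ hε0]; linarith)
  set J : ℕ := ⌈L⌉₊ + 2 with hJ
  set err : ℕ → ℝ := fun k => max (ε / (k:ℝ) ^ 2) (ε / (L + 3)) / 10 with herr
  have hL3 : (0:ℝ) < L + 3 := by linarith
  have herr_nonneg : ∀ k : ℕ, 0 ≤ err k := by
    intro k
    rw [herr]
    have h1 : (0:ℝ) ≤ ε / (k:ℝ) ^ 2 := div_nonneg hε0.le (sq_nonneg _)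
    have := le_trans h1 (le_max_left (ε / (k:ℝ) ^ 2) (ε / (L + 3)))
    positivity
  set G : ℝ → ℝ := fun t => (D (IicE (quant Dstar t))).toReal with hGdef
  have hG0 : G 0 = 0 := by
    have he : IicE (quant Dstar 0) = ∅ := by
      rw [quant_zero]
      ext y
      simp [IicE, le_bot_iff, EReal.coe_ne_bot]
    rw [hGdef]
    simp [he]
  have hG1 : G 1 = 1 := by
    have he : IicE (quant Dstar 1) = Set.univ := by
      rw [quant_one]
      ext y
      simp [IicE]
    rw [hGdef]
    simp [he]
  have hupper : ∀ jj ii : ℕ, ii ≤ 2 ^ jj → (ii:ℝ) * 2 ^ (-(jj:ℤ)) ≤ 1 := by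
    intro jj ii h
    have h1 : (ii:ℝ) ≤ (2:ℝ) ^ (jj:ℕ) := by exact_mod_cast h
    have h2 : (0:ℝ) < 2 ^ (-(jj:ℤ)) := by positivity
    calc (ii:ℝ) * 2 ^ (-(jj:ℤ)) ≤ (2:ℝ) ^ (jj:ℕ) * 2 ^ (-(jj:ℤ)) :=
          mul_le_mul_of_nonneg_right h1 h2.le
    _ = 1 := by
          rw [← zpow_natCast (2:ℝ) jj, ← zpow_add₀ (two_ne_zero : (2:ℝ) ≠ 0)]
          simp
  -- key dyadic induction
  have key : ∀ j : ℕ, j ≤ J → ∀ i : ℕ, i ≤ 2 ^ j →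
      |G ((i:ℝ) * 2 ^ (-(j:ℤ))) - (i:ℝ) * 2 ^ (-(j:ℤ))| ≤ ∑ k ∈ Finset.Icc 1 j, err k := by
    intro j
    induction j with
    | zero =>
      intro _ i hi
      norm_num at hi
      interval_cases i
      · have e : ((0:ℕ):ℝ) * 2 ^ (-((0:ℕ):ℤ)) = 0 := by norm_num
        rw [e, hG0]
        simp
      · have e : ((1:ℕ):ℝ) * 2 ^ (-((0:ℕ):ℤ)) = 1 := by norm_num
        rw [e, hG1]
        simp
    | succ j ih =>
      intro hjJ i hi
      have hjJ' : j ≤ J := by omega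
      have hsplit : (2:ℝ) ^ (-((j:ℤ) + 1)) = 2 ^ (-(j:ℤ)) * 2⁻¹ := by
        rw [show -((j:ℤ) + 1) = -(j:ℤ) + (-1) from by ring,
          zpow_add₀ (two_ne_zero : (2:ℝ) ≠ 0)]
        norm_num
      rcases Nat.even_or_odd i with ⟨m, hm⟩ | ⟨m, hm⟩
      · subst hm
        have hm2 : m ≤ 2 ^ j := by rw [pow_succ] at hi; omega
        have harg : ((m + m : ℕ):ℝ) * 2 ^ (-((j + 1:ℕ):ℤ)) = (m:ℝ) * 2 ^ (-(j:ℤ)) := by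
          push_cast
          rw [show -((j:ℤ) + 1) = -(j:ℤ) + (-1) from by ring,
            zpow_add₀ (two_ne_zero : (2:ℝ) ≠ 0)]
          ring
        rw [harg]
        exact (ih hjJ' m hm2).trans (Finset.sum_le_sum_of_subset_of_nonneg
          (Finset.Icc_subset_Icc_right (by omega)) fun k _ _ => herr_nonneg k)
      · subst hm
        have hm2 : m ≤ 2 ^ j := by rw [pow_succ] at hi; omega
        have hcl := hclose (j + 1) (by omega) hjJ (2 * m + 1) (by omega) hi
        have e1 := bucket_toReal (D := D) (μ := Dstar) (i := 2 * m + 1) (j := j + 1)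
          (by omega) (hupper (j + 1) (2 * m + 1) hi)
        have ih' := ih hjJ' m hm2
        have hsum : ∑ k ∈ Finset.Icc 1 (j + 1), err k
            = (∑ k ∈ Finset.Icc 1 j, err k) + err (j + 1) :=
          Finset.sum_Icc_succ_top (by omega) _
        have hA : (((2 * m + 1 : ℕ):ℝ) - 1) * 2 ^ (-((j + 1:ℕ):ℤ)) = (m:ℝ) * 2 ^ (-(j:ℤ)) := by
          push_cast
          rw [show -((j:ℤ) + 1) = -(j:ℤ) + (-1) from by ring,
            zpow_add₀ (two_ne_zero : (2:ℝ) ≠ 0)]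
          ring
        have hB : ((2 * m + 1 : ℕ):ℝ) * 2 ^ (-((j + 1:ℕ):ℤ))
            = (m:ℝ) * 2 ^ (-(j:ℤ)) + 2 ^ (-((j + 1:ℕ):ℤ)) := by
          push_cast
          rw [show -((j:ℤ) + 1) = -(j:ℤ) + (-1) from by ring,
            zpow_add₀ (two_ne_zero : (2:ℝ) ≠ 0)]
          ring
        rw [hA] at e1
        have e1' : (D (bucket Dstar (2 * m + 1) (j + 1))).toReal
            = G (((2 * m + 1 : ℕ):ℝ) * 2 ^ (-((j + 1:ℕ):ℤ))) - G ((m:ℝ) * 2 ^ (-(j:ℤ))) := e1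
        rw [hB] at e1'
        rw [hsum]
        have hclerr : |(D (bucket Dstar (2 * m + 1) (j + 1))).toReal - 2 ^ (-((j + 1:ℕ):ℤ))|
            < err (j + 1) := by
          rw [herr]
          exact hcl
        obtain ⟨l1, r1⟩ := abs_le.1 ih'
        obtain ⟨l2, r2⟩ := abs_lt.1 hclerr
        rw [abs_le]
        constructor
        · rw [hB]; linarith
        · rw [hB]; linarith
  -- numeric facts
  have hJL : (J:ℝ) ≤ L + 3 := by
    have h1 : (⌈L⌉₊:ℝ) < L + 1 := Nat.ceil_lt_add_one hL0
    have h2 : (J:ℝ) = (⌈L⌉₊:ℝ) + 2 := by rw [hJ]; push_cast; ring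
    linarith
  have hE : ∑ k ∈ Finset.Icc 1 J, err k ≤ 3 * ε / 10 := by
    have hbound : ∀ k ∈ Finset.Icc 1 J, err k ≤ (ε / 10) * (1 / (k:ℝ) ^ 2) + ε / (L + 3) / 10 := by
      intro k _
      have hmax : max (ε / (k:ℝ) ^ 2) (ε / (L + 3)) ≤ ε / (k:ℝ) ^ 2 + ε / (L + 3) :=
        max_le_add_of_nonneg (div_nonneg hε0.le (sq_nonneg _)) (div_nonneg hε0.le hL3.le)
      rw [herr]
      have : (ε / 10) * (1 / (k:ℝ) ^ 2) = ε / (k:ℝ) ^ 2 / 10 := by ring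
      rw [this]
      linarith
    have hs1 : ∑ k ∈ Finset.Icc 1 J, ((ε / 10) * (1 / (k:ℝ) ^ 2) + ε / (L + 3) / 10)
        = (ε / 10) * (∑ k ∈ Finset.Icc 1 J, (1:ℝ) / (k:ℝ) ^ 2) + (J:ℝ) * (ε / (L + 3) / 10) := by
      rw [Finset.sum_add_distrib, Finset.mul_sum, Finset.sum_const, Nat.card_Icc]
      simp [nsmul_eq_mul]
    have hs2 : ∑ k ∈ Finset.Icc 1 J, (1:ℝ) / (k:ℝ) ^ 2 ≤ 2 := by
      have := sum_inv_sq_le (⌈L⌉₊ + 1)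
      push_cast at this
      have hJe : J = (⌈L⌉₊ + 1) + 1 := by omega
      rw [hJe]
      refine this.trans ?_
      have : (0:ℝ) < (⌈L⌉₊:ℝ) + 1 + 1 := by positivity
      have := one_div_pos.2 this
      linarith
    have hs3 : (J:ℝ) * (ε / (L + 3) / 10) ≤ ε / 10 := by
      have hpos : (0:ℝ) ≤ ε / (L + 3) / 10 := by positivity
      have := mul_le_mul_of_nonneg_right hJL hpos
      have heq : (L + 3) * (ε / (L + 3) / 10) = ε / 10 := by
        field_simp
      linarith
    calc ∑ k ∈ Finset.Icc 1 J, err k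
        ≤ ∑ k ∈ Finset.Icc 1 J, ((ε / 10) * (1 / (k:ℝ) ^ 2) + ε / (L + 3) / 10) :=
          Finset.sum_le_sum hbound
    _ = (ε / 10) * (∑ k ∈ Finset.Icc 1 J, (1:ℝ) / (k:ℝ) ^ 2) + (J:ℝ) * (ε / (L + 3) / 10) := hs1
    _ ≤ (ε / 10) * 2 + ε / 10 := by
          have h1 : (ε / 10) * (∑ k ∈ Finset.Icc 1 J, (1:ℝ) / (k:ℝ) ^ 2) ≤ (ε / 10) * 2 :=
            mul_le_mul_of_nonneg_left hs2 (by positivity)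
          linarith
    _ = 3 * ε / 10 := by ring
  have hpowJ : (2:ℝ) ^ (-(J:ℤ)) ≤ ε / 4 := by
    have h1 : L ≤ (⌈L⌉₊:ℝ) := Nat.le_ceil L
    have h2 : (1:ℝ) / ε ≤ (2:ℝ) ^ (⌈L⌉₊:ℕ) := by
      have he : (1:ℝ) / ε = (2:ℝ) ^ L := by
        rw [hL]
        exact (Real.rpow_logb (by norm_num) (by norm_num) (by positivity)).symm
      rw [he]
      calc (2:ℝ) ^ L ≤ (2:ℝ) ^ ((⌈L⌉₊:ℕ):ℝ) := Real.rpow_le_rpow_of_exponent_le one_le_two h1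
      _ = (2:ℝ) ^ (⌈L⌉₊:ℕ) := Real.rpow_natCast 2 _
    have h3 : (2:ℝ) ^ (-(J:ℤ)) = 1 / ((2:ℝ) ^ (J:ℕ)) := by
      rw [zpow_neg, zpow_natCast, one_div]
    have h4 : (2:ℝ) ^ (J:ℕ) = (2:ℝ) ^ (⌈L⌉₊:ℕ) * 4 := by
      rw [hJ, pow_add]; norm_num
    rw [h3, h4]
    have hc : (0:ℝ) < (2:ℝ) ^ (⌈L⌉₊:ℕ) := by positivity
    rw [div_le_div_iff₀ (by positivity) (by norm_num)]
    have h5 : 1 ≤ (2:ℝ) ^ (⌈L⌉₊:ℕ) * ε := (div_le_iff₀ hε0).1 h2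
    nlinarith
  have hpowJ0 : (0:ℝ) < (2:ℝ) ^ (-(J:ℤ)) := by positivity
  have hone : ∀ jj : ℕ, ((2 ^ jj : ℕ):ℝ) * 2 ^ (-(jj:ℤ)) = 1 := by
    intro jj
    rw [Nat.cast_pow, Nat.cast_ofNat, ← zpow_natCast (2:ℝ) jj,
      ← zpow_add₀ (two_ne_zero : (2:ℝ) ≠ 0)]
    simp
  -- per-point bound
  have hker : ∀ x : ℝ, |(D (Set.Iic x)).toReal - (Dstar (Set.Iic x)).toReal|
      ≤ 2 ^ (-(J:ℤ)) + ∑ k ∈ Finset.Icc 1 J, err k := by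
    intro x
    have hPex : ∃ n : ℕ, (x : EReal) ≤ quant Dstar ((n:ℝ) * 2 ^ (-(J:ℤ))) := by
      refine ⟨2 ^ J, ?_⟩
      rw [hone J, quant_one]
      exact le_top
    set i := Nat.find hPex with hidef
    have hPi : (x : EReal) ≤ quant Dstar ((i:ℝ) * 2 ^ (-(J:ℤ))) := Nat.find_spec hPex
    have hiL : i ≤ 2 ^ J := by
      apply Nat.find_le
      rw [hone J, quant_one]
      exact le_top
    have hi1 : 1 ≤ i := by
      by_contra hc
      push_neg at hc
      interval_cases i
      · have := hPi
        norm_num [quant_zero] at this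
    have hPm : ¬ (x : EReal) ≤ quant Dstar (((i - 1 : ℕ):ℝ) * 2 ^ (-(J:ℤ))) :=
      Nat.find_min hPex (by omega)
    have hqlt : quant Dstar (((i - 1 : ℕ):ℝ) * 2 ^ (-(J:ℤ))) < (x : EReal) := not_le.1 hPm
    have hcast : ((i - 1 : ℕ):ℝ) = (i:ℝ) - 1 := by
      rw [Nat.cast_sub hi1]; norm_num
    have hA0 : (0:ℝ) ≤ ((i - 1 : ℕ):ℝ) * 2 ^ (-(J:ℤ)) := by positivity
    have hB1 : (i:ℝ) * 2 ^ (-(J:ℤ)) ≤ 1 := hupper J i hiL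
    have hBA : (i:ℝ) * 2 ^ (-(J:ℤ)) - ((i - 1 : ℕ):ℝ) * 2 ^ (-(J:ℤ)) = 2 ^ (-(J:ℤ)) := by
      rw [hcast]; ring
    have hBpos : (0:ℝ) < (i:ℝ) * 2 ^ (-(J:ℤ)) := by
      have : (0:ℝ) < (i:ℝ) := by exact_mod_cast hi1
      positivity
    -- Fstar bounds
    have hFsb : (Dstar (Set.Iic x)).toReal ≤ (i:ℝ) * 2 ^ (-(J:ℤ)) := by
      by_cases hBe : (i:ℝ) * 2 ^ (-(J:ℤ)) = 1
      · rw [hBe]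
        calc (Dstar (Set.Iic x)).toReal ≤ (Dstar Set.univ).toReal :=
              ENNReal.toReal_mono (measure_ne_top _ _) (measure_mono (Set.subset_univ _))
        _ = 1 := by simp
      · exact cdf_le_of_le_quant Dstar hDstar hBpos.le (ne_of_gt hBpos) hBe hPi
    have hFsa : ((i - 1 : ℕ):ℝ) * 2 ^ (-(J:ℤ)) ≤ (Dstar (Set.Iic x)).toReal := by
      by_cases hAe : ((i - 1 : ℕ):ℝ) * 2 ^ (-(J:ℤ)) = 0
      · rw [hAe]; exact ENNReal.toReal_nonneg
      · have hA1 : ((i - 1 : ℕ):ℝ) * 2 ^ (-(J:ℤ)) ≠ 1 := by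
          intro hone
          have : (i:ℝ) * 2 ^ (-(J:ℤ)) > 1 := by
            rw [← hone]
            linarith [hBA, hpowJ0]
          linarith
        exact (lt_cdf_of_quant_lt Dstar hAe hA1 hqlt).le
    -- FD bounds
    have hFda : G (((i - 1 : ℕ):ℝ) * 2 ^ (-(J:ℤ))) ≤ (D (Set.Iic x)).toReal := by
      rw [hGdef]
      refine ENNReal.toReal_mono (measure_ne_top _ _) (measure_mono ?_)
      intro y hy
      have hlt : (y:EReal) < (x:EReal) := lt_of_le_of_lt hy hqlt
      exact le_of_lt (EReal.coe_lt_coe_iff.1 hlt)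
    have hFdb : (D (Set.Iic x)).toReal ≤ G ((i:ℝ) * 2 ^ (-(J:ℤ))) := by
      rw [hGdef]
      refine ENNReal.toReal_mono (measure_ne_top _ _) (measure_mono ?_)
      intro y hy
      exact le_trans (EReal.coe_le_coe_iff.2 hy) hPi
    have k1 := key J le_rfl i hiL
    have k2 := key J le_rfl (i - 1) (by omega)
    obtain ⟨k1l, k1r⟩ := abs_le.1 k1
    obtain ⟨k2l, k2r⟩ := abs_le.1 k2
    rw [abs_le]
    constructor
    · linarith
    · linarith
  have hfin : (2:ℝ) ^ (-(J:ℤ)) + ∑ k ∈ Finset.Icc 1 J, err k < ε := by linarith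
  rw [kolDist]
  exact lt_of_le_of_lt (ciSup_le hker) hfin
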